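/- Let xs < xt be integers, C ≥ 0 a real number, and f : ℤ → ℝ a function satisfying the Ameso(C) condition on [xs,xt]. Suppose there exist x0 ∈ [xs,xt] and a positive integer b with xs ≤ x0 − b such that (a) f(x0) = min over y ∈ [x0−b, xt] of f(y), and (b) f(x0) + C ≤ max over y ∈ [x0−b, x0] of f(y). Then f(x0) = min over y ∈ [xs, xt] of f(y). -/
import Mathlib

def mceil (x y : ℤ) : ℤ := ⌈((x : ℚ) + (y : ℚ)) / 2⌉
def mfloor (x y : ℤ) : ℤ := ⌊((x : ℚ) + (y : ℚ)) / 2⌋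

lemma mceil_refl (w t : ℤ) : mceil (w - t) (w + t) = w := by
  unfold mceil
  have h : ((w - t : ℤ) : ℚ) + ((w + t : ℤ) : ℚ) = 2 * (w : ℚ) := by push_cast; ring
  rw [h, mul_comm, mul_div_assoc]
  norm_num

lemma mfloor_refl (w t : ℤ) : mfloor (w - t) (w + t) = w := by
  unfold mfloor
  have h : ((w - t : ℤ) : ℚ) + ((w + t : ℤ) : ℚ) = 2 * (w : ℚ) := by push_cast; ring
  rw [h, mul_comm, mul_div_assoc]
  norm_num

/-- Theorem 2 (global optimizer, left): if `f(x0)` is the minimum of `f` on `[x0-b, xt]`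
and `f(x0) + C ≤ max_{[x0-b, x0]} f`, then `f(x0)` is the minimum of `f` on `[xs, xt]`. -/
theorem ameso_global_optimizer_left
    (xs xt : ℤ) (hxst : xs < xt) (C : ℝ) (hC : 0 ≤ C) (f : ℤ → ℝ)
    (hAmeso : ∀ x ∈ Finset.Icc xs xt, ∀ y ∈ Finset.Icc xs xt,
      f x + f y + C ≥ f (mceil x y) + f (mfloor x y))
    (x0 : ℤ) (hx0l : xs ≤ x0) (hx0r : x0 ≤ xt)
    (b : ℤ) (hb : 0 < b) (hbs : xs ≤ x0 - b)
    (hmin : f x0 = (Finset.Icc (x0 - b) xt).inf' (Finset.nonempty_Icc.2 (by omega)) f)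
    (hmax : f x0 + C ≤ (Finset.Icc (x0 - b) x0).sup' (Finset.nonempty_Icc.2 (by omega)) f) :
    f x0 = (Finset.Icc xs xt).inf' (Finset.nonempty_Icc.2 (by omega)) f := by
  have hx0mem : x0 ∈ Finset.Icc xs xt := Finset.mem_Icc.2 ⟨hx0l, hx0r⟩
  have hmin' : ∀ y ∈ Finset.Icc (x0 - b) xt, f x0 ≤ f y := by
    intro y hy; rw [hmin]; exact Finset.inf'_le f hy
  by_contra hne
  -- there is a point cheaper than x0
  have hex : ∃ y ∈ Finset.Icc xs xt, f y < f x0 := by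
    by_contra h
    push_neg at h
    exact hne (le_antisymm (Finset.le_inf' _ _ h) (Finset.inf'_le f hx0mem))
  -- take z maximal with f z < f x0
  set B := (Finset.Icc xs xt).filter (fun y => f y < f x0) with hB
  have hBne : B.Nonempty := by
    obtain ⟨y, hy, hfy⟩ := hex
    exact ⟨y, Finset.mem_filter.2 ⟨hy, hfy⟩⟩
  set z := B.max' hBne with hz
  have hzB : z ∈ B := B.max'_mem hBne
  obtain ⟨hzmem, hzlt⟩ := Finset.mem_filter.1 hzB
  obtain ⟨hzl, hzr⟩ := Finset.mem_Icc.1 hzmem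
  have hzmax : ∀ y ∈ Finset.Icc xs xt, z < y → f x0 ≤ f y := by
    intro y hy hzy
    by_contra h
    push_neg at h
    exact absurd (B.le_max' y (Finset.mem_filter.2 ⟨hy, h⟩)) (by omega)
  have hzlb : z < x0 - b := by
    by_contra h
    push_neg at h
    exact absurd (hmin' z (Finset.mem_Icc.2 ⟨h, hzr⟩)) (not_le.2 hzlt)
  -- f ≥ f x0 on [z+1, x0]
  have key : ∀ y ∈ Finset.Icc (z + 1) x0, f x0 ≤ f y := by
    intro y hy
    obtain ⟨hy1, hy2⟩ := Finset.mem_Icc.1 hy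
    rcases le_or_gt (x0 - b) y with h | h
    · exact hmin' y (Finset.mem_Icc.2 ⟨h, le_trans hy2 hx0r⟩)
    · exact hzmax y (Finset.mem_Icc.2 ⟨by omega, le_trans hy2 hx0r⟩) (by omega)
  have hTne : (Finset.Icc (z + 1) x0).Nonempty := Finset.nonempty_Icc.2 (by omega)
  set S := (Finset.Icc (z + 1) x0).sup' hTne f with hS
  have hCS : f x0 + C ≤ S := by
    refine le_trans hmax (Finset.sup'_mono f ?_ _)
    intro v hv
    obtain ⟨h1, h2⟩ := Finset.mem_Icc.1 hv
    exact Finset.mem_Icc.2 ⟨by omega, h2⟩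
  have hle : ∀ v ∈ Finset.Icc (z + 1) x0, f v ≤ S := fun v hv => Finset.le_sup' f hv
  -- least maximizer
  set A := (Finset.Icc (z + 1) x0).filter (fun v => f v = S) with hA
  have hAne : A.Nonempty := by
    obtain ⟨v, hv, hfv⟩ := Finset.exists_mem_eq_sup' hTne f
    exact ⟨v, Finset.mem_filter.2 ⟨hv, hfv.symm⟩⟩
  set w := A.min' hAne with hw
  have hwA : w ∈ A := A.min'_mem hAne
  obtain ⟨hwT, hwS⟩ := Finset.mem_filter.1 hwA
  obtain ⟨hw1, hw2⟩ := Finset.mem_Icc.1 hwT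
  have hwmin : ∀ v ∈ Finset.Icc (z + 1) x0, f v = S → w ≤ v := by
    intro v hv hfv
    exact A.min'_le v (Finset.mem_filter.2 ⟨hv, hfv⟩)
  have hwx0 : w < x0 := by
    rcases lt_or_eq_of_le hw2 with h | h
    · exact h
    · exfalso
      have h1 : f (z + 1) ≤ S := hle _ (Finset.mem_Icc.2 ⟨le_refl _, by omega⟩)
      have h2 : f x0 ≤ f (z + 1) := key _ (Finset.mem_Icc.2 ⟨le_refl _, by omega⟩)
      have h3 : f (z + 1) = S := by
        have : S = f x0 := by rw [← h, hwS]
        linarith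
      have := hwmin (z + 1) (Finset.mem_Icc.2 ⟨le_refl _, by omega⟩) h3
      omega
  set t := min (w - z) (x0 - w) with ht
  have ht1 : 1 ≤ t := by omega
  have hAm := hAmeso (w - t) (Finset.mem_Icc.2 ⟨by omega, by omega⟩)
    (w + t) (Finset.mem_Icc.2 ⟨by omega, by omega⟩)
  rw [mceil_refl, mfloor_refl] at hAm
  rcases le_or_gt (w - z) (x0 - w) with hcase | hcase
  · -- t = w - z, so w - t = z
    have htz : w - t = z := by omega
    rw [htz] at hAm
    have h1 : f (w + t) ≤ S := hle _ (Finset.mem_Icc.2 ⟨by omega, by omega⟩)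
    linarith [hwS ▸ hAm]
  · -- t = x0 - w, so w + t = x0
    have htx : w + t = x0 := by omega
    rw [htx] at hAm
    have hwtT : w - t ∈ Finset.Icc (z + 1) x0 := Finset.mem_Icc.2 ⟨by omega, by omega⟩
    have h1 : f (w - t) ≤ S := hle _ hwtT
    have h2 : f (w - t) ≠ S := by
      intro h
      have := hwmin _ hwtT h
      omega
    have h3 : f (w - t) < S := lt_of_le_of_ne h1 h2
    linarith [hwS ▸ hAm]
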